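/- If X is a càdlàg path of finite p-variation with p ∈ [1,2) on [0,T] with values in ℝ^d, and one defines 𝕏_{s,t} as the Young integral ∫_{(s,t]} (X_{r-} − X_s) ⊗ dX_r, then 𝕏 has finite p/2-variation, i.e. sup over partitions P of ∑_{[s,t]∈P} |𝕏_{s,t}|^{p/2} < ∞. -/

import Mathlib

open scoped BigOperators
open MeasureTheory

noncomputable section

def IsPartition (a b : ℝ) (P : Finset ℝ) : Prop :=
  a ∈ P ∧ b ∈ P ∧ ∀ x ∈ P, x ∈ Set.Icc a b

noncomputable def nextPt (P : Finset ℝ) (b x : ℝ) : ℝ :=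
  WithBot.unbotD b (P.filter (fun y => x < y)).min

noncomputable def varSum {E : Type*} [NormedAddCommGroup E] (X : ℝ → E) (p b : ℝ)
    (P : Finset ℝ) : ℝ :=
  ∑ x ∈ P.erase b, ‖X (nextPt P b x) - X x‖ ^ p

def HasFiniteVar {E : Type*} [NormedAddCommGroup E] (X : ℝ → E) (p a b : ℝ) : Prop :=
  ∃ M : ℝ, ∀ P : Finset ℝ, IsPartition a b P → varSum X p b P ≤ M

noncomputable def varNorm {E : Type*} [NormedAddCommGroup E] (X : ℝ → E) (p a b : ℝ) : ℝ :=
  (sSup {v | ∃ P : Finset ℝ, IsPartition a b P ∧ v = varSum X p b P}) ^ (1 / p)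

def Cadlag {E : Type*} [NormedAddCommGroup E] (X : ℝ → E) (a b : ℝ) : Prop :=
  (∀ t ∈ Set.Ico a b, Filter.Tendsto X (nhdsWithin t (Set.Ici t)) (nhds (X t))) ∧
  (∀ t ∈ Set.Ioc a b, ∃ L : E, Filter.Tendsto X (nhdsWithin t (Set.Iio t)) (nhds L))

noncomputable def minus {E : Type*} [NormedAddCommGroup E] (X : ℝ → E) (a t : ℝ) : E :=
  if t ≤ a then X a else Function.leftLim X t

noncomputable def jump {E : Type*} [NormedAddCommGroup E] (X : ℝ → E) (a t : ℝ) : E :=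
  X t - minus X a t

def RRSTendsto {E : Type*} [NormedAddCommGroup E] (a b : ℝ) (S : Finset ℝ → E) (L : E) : Prop :=
  ∀ ε > 0, ∃ P₀ : Finset ℝ, IsPartition a b P₀ ∧
    ∀ P : Finset ℝ, IsPartition a b P → P₀ ⊆ P → ‖S P - L‖ < ε


noncomputable def varSum2 {F : Type*} [NormedAddCommGroup F] (Ξ : ℝ → ℝ → F) (q b : ℝ)
    (P : Finset ℝ) : ℝ :=
  ∑ x ∈ P.erase b, ‖Ξ x (nextPt P b x)‖ ^ q

def HasFiniteVar2 {F : Type*} [NormedAddCommGroup F] (Ξ : ℝ → ℝ → F) (q a b : ℝ) : Prop :=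
  ∃ M : ℝ, ∀ P : Finset ℝ, IsPartition a b P → varSum2 Ξ q b P ≤ M

noncomputable def prevPt (P : Finset ℝ) (a x : ℝ) : ℝ :=
  WithBot.unbotD a (P.filter (fun y => y < x)).max

lemma nextPt_eq_of {P : Finset ℝ} {b x y : ℝ} (hy : y ∈ P) (hxy : x < y)
    (hmin : ∀ z ∈ P, x < z → y ≤ z) : nextPt P b x = y := by
  have hyf : y ∈ P.filter (fun w => x < w) := Finset.mem_filter.2 ⟨hy, hxy⟩
  have h : (P.filter (fun w => x < w)).min = (y : WithTop ℝ) := by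
    apply le_antisymm (Finset.min_le hyf)
    refine Finset.le_min (fun z hz => ?_)
    rw [Finset.mem_filter] at hz
    exact WithTop.coe_le_coe.2 (hmin z hz.1 hz.2)
  rw [nextPt, h]; rfl

lemma prevPt_eq_of {P : Finset ℝ} {a x y : ℝ} (hy : y ∈ P) (hxy : y < x)
    (hmax : ∀ z ∈ P, z < x → z ≤ y) : prevPt P a x = y := by
  have hyf : y ∈ P.filter (fun w => w < x) := Finset.mem_filter.2 ⟨hy, hxy⟩
  have h : (P.filter (fun w => w < x)).max = (y : WithBot ℝ) := by
    apply le_antisymm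
    · refine Finset.max_le (fun z hz => ?_)
      rw [Finset.mem_filter] at hz
      exact WithBot.coe_le_coe.2 (hmax z hz.1 hz.2)
    · exact Finset.le_max hyf
  rw [prevPt, h]; rfl

lemma nextPt_spec {P : Finset ℝ} {b x : ℝ} (hb : b ∈ P) (hx : x < b) :
    nextPt P b x ∈ P ∧ x < nextPt P b x ∧ ∀ z ∈ P, x < z → nextPt P b x ≤ z := by
  have hbf : b ∈ P.filter (fun w => x < w) := Finset.mem_filter.2 ⟨hb, hx⟩
  have hne : (P.filter (fun w => x < w)).Nonempty := ⟨b, hbf⟩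
  have hmem := Finset.min'_mem _ hne
  rw [Finset.mem_filter] at hmem
  have hle : ∀ z ∈ P, x < z → (P.filter (fun w => x < w)).min' hne ≤ z := fun z hz hxz =>
    Finset.min'_le (P.filter (fun w => x < w)) z (Finset.mem_filter.2 ⟨hz, hxz⟩)
  have heq : nextPt P b x = (P.filter (fun w => x < w)).min' hne :=
    nextPt_eq_of hmem.1 hmem.2 hle
  rw [heq]
  exact ⟨hmem.1, hmem.2, hle⟩

lemma prevPt_spec {P : Finset ℝ} {a x : ℝ} (ha : a ∈ P) (hx : a < x) :
    prevPt P a x ∈ P ∧ prevPt P a x < x ∧ ∀ z ∈ P, z < x → z ≤ prevPt P a x := by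
  have haf : a ∈ P.filter (fun w => w < x) := Finset.mem_filter.2 ⟨ha, hx⟩
  have hne : (P.filter (fun w => w < x)).Nonempty := ⟨a, haf⟩
  have hmem := Finset.max'_mem _ hne
  rw [Finset.mem_filter] at hmem
  have hle : ∀ z ∈ P, z < x → z ≤ (P.filter (fun w => w < x)).max' hne := fun z hz hxz =>
    Finset.le_max' (P.filter (fun w => w < x)) z (Finset.mem_filter.2 ⟨hz, hxz⟩)
  have heq : prevPt P a x = (P.filter (fun w => w < x)).max' hne :=
    prevPt_eq_of hmem.1 hmem.2 hle
  rw [heq]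
  exact ⟨hmem.1, hmem.2, hle⟩

lemma nextPt_prevPt {P : Finset ℝ} {a b c : ℝ} (ha : a ∈ P) (hc : c ∈ P) (hac : a < c) :
    nextPt P b (prevPt P a c) = c := by
  obtain ⟨hm, hlt, hmax⟩ := prevPt_spec ha hac
  refine nextPt_eq_of hc hlt (fun z hz hxz => ?_)
  by_contra h
  push_neg at h
  exact absurd (hmax z hz h) (not_le.2 hxz)


section RS

variable {E : Type*} [AddCommGroup E]

def RS (f : ℝ → ℝ → E) (b : ℝ) (P : Finset ℝ) : E := ∑ x ∈ P.erase b, f x (nextPt P b x)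

lemma RS_removal (f : ℝ → ℝ → E) {a b c : ℝ} {P : Finset ℝ}
    (hP : IsPartition a b P) (hc : c ∈ P) (hca : c ≠ a) (hcb : c ≠ b) :
    RS f b P - RS f b (P.erase c) =
      f (prevPt P a c) c + f c (nextPt P b c) - f (prevPt P a c) (nextPt P b c) := by
  obtain ⟨ha, hb, hmem⟩ := hP
  obtain ⟨hcab⟩ := hmem c hc
  have hac : a < c := lt_of_le_of_ne hcab (Ne.symm hca)
  have hcb' : c < b := lt_of_le_of_ne (hmem c hc).2 hcb
  set x₀ := prevPt P a c with hx₀def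
  set sc := nextPt P b c with hscdef
  obtain ⟨hx₀P, hx₀c, hx₀max⟩ := prevPt_spec ha hac
  obtain ⟨hscP, hcsc, hscmin⟩ := nextPt_spec hb hcb'
  have hnx₀ : nextPt P b x₀ = c := nextPt_prevPt ha hc hac
  have hx₀b : x₀ ≠ b := ne_of_lt (lt_trans hx₀c hcb')
  -- nextPt in P.erase c at x₀
  have hnx₀' : nextPt (P.erase c) b x₀ = sc := by
    refine nextPt_eq_of (Finset.mem_erase.2 ⟨ne_of_gt hcsc, hscP⟩)
      (lt_trans hx₀c hcsc) (fun z hz hxz => ?_)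
    rw [Finset.mem_erase] at hz
    rcases lt_or_gt_of_ne hz.1 with h | h
    · exact absurd (hx₀max z hz.2 h) (not_le.2 hxz)
    · exact hscmin z hz.2 h
  -- nextPt unchanged away from x₀
  have hagree : ∀ x ∈ ((P.erase b).erase c).erase x₀,
      nextPt (P.erase c) b x = nextPt P b x := by
    intro x hx
    rw [Finset.mem_erase, Finset.mem_erase, Finset.mem_erase] at hx
    obtain ⟨hxx₀, hxc, hxb, hxP⟩ := hx
    have hxb' : x < b := lt_of_le_of_ne (hmem x hxP).2 hxb
    obtain ⟨hyP, hxy, hymin⟩ := nextPt_spec hb hxb'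
    have hyc : nextPt P b x ≠ c := by
      intro h
      have hxc' : x < c := h ▸ hxy
      have hxle : x ≤ x₀ := hx₀max x hxP hxc'
      have hxlt : x < x₀ := lt_of_le_of_ne hxle hxx₀
      have := hymin x₀ hx₀P hxlt
      rw [h] at this
      exact absurd this (not_le.2 hx₀c)
    exact nextPt_eq_of (Finset.mem_erase.2 ⟨hyc, hyP⟩) hxy
      (fun z hz hxz => hymin z (Finset.mem_erase.1 hz).2 hxz)
  -- sum decompositions
  have hcmem : c ∈ P.erase b := Finset.mem_erase.2 ⟨hcb, hc⟩
  have hx₀mem : x₀ ∈ (P.erase b).erase c :=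
    Finset.mem_erase.2 ⟨ne_of_lt hx₀c, Finset.mem_erase.2 ⟨hx₀b, hx₀P⟩⟩
  have h1 : RS f b P = f c sc + (f x₀ c +
      ∑ x ∈ ((P.erase b).erase c).erase x₀, f x (nextPt P b x)) := by
    rw [RS, ← Finset.add_sum_erase _ _ hcmem, ← Finset.add_sum_erase _ _ hx₀mem, hnx₀]
  have h2 : RS f b (P.erase c) = f x₀ sc +
      ∑ x ∈ ((P.erase b).erase c).erase x₀, f x (nextPt P b x) := by
    rw [RS, Finset.erase_right_comm, ← Finset.add_sum_erase _ _ hx₀mem, hnx₀']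
    congr 1
    exact Finset.sum_congr rfl (fun x hx => by rw [hagree x hx])
  rw [h1, h2]
  abel

end RS

section Omega

variable {E : Type*} [NormedAddCommGroup E]

noncomputable def omg (X : ℝ → E) (p s t : ℝ) : ℝ :=
  sSup {v | ∃ P : Finset ℝ, IsPartition s t P ∧ v = varSum X p t P}

variable {X : ℝ → E} {p T M : ℝ}

lemma varSum_nonneg (X : ℝ → E) (p b : ℝ) (P : Finset ℝ) : 0 ≤ varSum X p b P :=
  Finset.sum_nonneg (fun x _ => Real.rpow_nonneg (norm_nonneg _) p)

lemma pair_partition {s t : ℝ} (hst : s ≤ t) : IsPartition s t (insert s {t}) := by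
  refine ⟨Finset.mem_insert_self _ _, by simp, fun x hx => ?_⟩
  simp only [Finset.mem_insert, Finset.mem_singleton] at hx
  rcases hx with h | h <;> simp [h, hst, Set.mem_Icc, le_refl]

lemma omg_set_nonempty {s t : ℝ} (hst : s ≤ t) :
    {v | ∃ P : Finset ℝ, IsPartition s t P ∧ v = varSum X p t P}.Nonempty :=
  ⟨_, insert s {t}, pair_partition hst, rfl⟩

/-- Any partition of a subinterval has variation sum bounded by the global bound. -/
lemma varSum_le_global (hM : ∀ Q : Finset ℝ, IsPartition 0 T Q → varSum X p T Q ≤ M)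
    {s t : ℝ} (hs0 : 0 ≤ s) (htT : t ≤ T) {P : Finset ℝ} (hP : IsPartition s t P) :
    varSum X p t P ≤ M := by
  obtain ⟨hsP, htP, hmem⟩ := hP
  have hst : s ≤ t := (hmem s hsP).2
  set Q : Finset ℝ := insert 0 (insert T P) with hQ
  have hQpart : IsPartition 0 T Q := by
    refine ⟨Finset.mem_insert_self _ _, Finset.mem_insert_of_mem (Finset.mem_insert_self _ _),
      fun x hx => ?_⟩
    simp only [hQ, Finset.mem_insert] at hx
    rcases hx with h | h | h
    · exact ⟨le_of_eq h.symm, h ▸ (le_trans hs0 (le_trans hst htT))⟩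
    · exact ⟨h ▸ (le_trans hs0 (le_trans hst htT)), le_of_eq h⟩
    · exact ⟨le_trans hs0 (hmem x h).1, le_trans (hmem x h).2 htT⟩
  calc varSum X p t P = ∑ x ∈ P.erase t, ‖X (nextPt Q T x) - X x‖ ^ p := by
        refine Finset.sum_congr rfl (fun x hx => ?_)
        rw [Finset.mem_erase] at hx
        have hxt : x < t := lt_of_le_of_ne (hmem x hx.2).2 hx.1
        obtain ⟨hyP, hxy, hymin⟩ := nextPt_spec htP hxt
        have : nextPt Q T x = nextPt P t x := by
          refine nextPt_eq_of (by simp [hQ, hyP]) hxy (fun z hz hxz => ?_)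
          simp only [hQ, Finset.mem_insert] at hz
          rcases hz with h | h | h
          · exact absurd hxz (by rw [h]; exact not_lt.2 (le_trans hs0 (hmem x hx.2).1))
          · exact h ▸ le_trans (le_trans ((hmem _ hyP).2) htT) (le_of_eq rfl)
          · exact hymin z h hxz
        rw [this]
    _ ≤ ∑ x ∈ Q.erase T, ‖X (nextPt Q T x) - X x‖ ^ p := by
        refine Finset.sum_le_sum_of_subset_of_nonneg (fun x hx => ?_)
          (fun x _ _ => Real.rpow_nonneg (norm_nonneg _) p)
        rw [Finset.mem_erase] at hx
        have hxt : x < t := lt_of_le_of_ne (hmem x hx.2).2 hx.1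
        exact Finset.mem_erase.2 ⟨ne_of_lt (lt_of_lt_of_le hxt htT), by simp [hQ, hx.2]⟩
    _ ≤ M := hM Q hQpart

lemma omg_bddAbove (hM : ∀ Q : Finset ℝ, IsPartition 0 T Q → varSum X p T Q ≤ M)
    {s t : ℝ} (hs0 : 0 ≤ s) (htT : t ≤ T) :
    BddAbove {v | ∃ P : Finset ℝ, IsPartition s t P ∧ v = varSum X p t P} := by
  refine ⟨M, fun v hv => ?_⟩
  obtain ⟨P, hP, rfl⟩ := hv
  exact varSum_le_global hM hs0 htT hP

lemma varSum_le_omg (hM : ∀ Q : Finset ℝ, IsPartition 0 T Q → varSum X p T Q ≤ M)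
    {s t : ℝ} (hs0 : 0 ≤ s) (htT : t ≤ T) {P : Finset ℝ} (hP : IsPartition s t P) :
    varSum X p t P ≤ omg X p s t :=
  le_csSup (omg_bddAbove hM hs0 htT) ⟨P, hP, rfl⟩

lemma omg_nonneg (hM : ∀ Q : Finset ℝ, IsPartition 0 T Q → varSum X p T Q ≤ M)
    {s t : ℝ} (hs0 : 0 ≤ s) (htT : t ≤ T) (hst : s ≤ t) : 0 ≤ omg X p s t :=
  le_trans (varSum_nonneg X p t _) (varSum_le_omg hM hs0 htT (pair_partition hst))

lemma omg_le {s t B : ℝ} (hst : s ≤ t)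
    (h : ∀ P : Finset ℝ, IsPartition s t P → varSum X p t P ≤ B) : omg X p s t ≤ B := by
  refine csSup_le (omg_set_nonempty hst) (fun v hv => ?_)
  obtain ⟨P, hP, rfl⟩ := hv
  exact h P hP

lemma partition_self {t : ℝ} {P : Finset ℝ} (hP : IsPartition t t P) : P = {t} := by
  obtain ⟨ht, _, hmem⟩ := hP
  apply Finset.Subset.antisymm
  · intro x hx
    have := hmem x hx
    simp only [Set.Icc_self, Set.mem_singleton_iff] at this
    simp [this]
  · intro x hx
    simp only [Finset.mem_singleton] at hx
    exact hx ▸ ht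

lemma omg_self (X : ℝ → E) (p : ℝ) (t : ℝ) : omg X p t t = 0 := by
  have : {v | ∃ P : Finset ℝ, IsPartition t t P ∧ v = varSum X p t P} = {0} := by
    ext v
    simp only [Set.mem_setOf_eq, Set.mem_singleton_iff]
    constructor
    · rintro ⟨P, hP, rfl⟩
      rw [partition_self hP]
      simp [varSum]
    · rintro rfl
      refine ⟨{t}, ⟨by simp, by simp, fun x hx => by simp_all⟩, by simp [varSum]⟩
  rw [omg, this, csSup_singleton]

/-- single increment bound -/
lemma increment_le_omg (hM : ∀ Q : Finset ℝ, IsPartition 0 T Q → varSum X p T Q ≤ M)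
    (hp : 0 < p) {s t x y : ℝ} (hs0 : 0 ≤ s) (htT : t ≤ T) (hsx : s ≤ x) (hxy : x < y)
    (hyt : y ≤ t) : ‖X y - X x‖ ^ p ≤ omg X p s t := by
  set P : Finset ℝ := insert s (insert x (insert y {t})) with hPdef
  have hst : s ≤ t := le_trans hsx (le_trans (le_of_lt hxy) hyt)
  have hPt : t ∈ P := by simp [hPdef]
  have hP : IsPartition s t P := by
    refine ⟨by simp [hPdef], hPt, fun z hz => ?_⟩
    simp only [hPdef, Finset.mem_insert, Finset.mem_singleton] at hz
    rcases hz with h | h | h | h <;> subst h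
    · exact ⟨le_refl _, hst⟩
    · exact ⟨hsx, le_trans (le_of_lt hxy) hyt⟩
    · exact ⟨le_trans hsx (le_of_lt hxy), hyt⟩
    · exact ⟨hst, le_refl _⟩
  have hxP : x ∈ P.erase t :=
    Finset.mem_erase.2 ⟨ne_of_lt (lt_of_lt_of_le hxy hyt), by simp [hPdef]⟩
  have hnext : nextPt P t x = y := by
    refine nextPt_eq_of (by simp [hPdef]) hxy (fun z hz hxz => ?_)
    simp only [hPdef, Finset.mem_insert, Finset.mem_singleton] at hz
    rcases hz with h | h | h | h <;> subst h
    · exact absurd hxz (not_lt.2 hsx)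
    · exact absurd hxz (lt_irrefl _)
    · exact le_refl _
    · exact hyt
  have hsingle : ‖X y - X x‖ ^ p ≤ varSum X p t P := by
    have := Finset.single_le_sum (f := fun z => ‖X (nextPt P t z) - X z‖ ^ p)
      (fun z _ => Real.rpow_nonneg (norm_nonneg _) p) hxP
    simp only [hnext] at this
    exact this
  exact le_trans hsingle (varSum_le_omg hM hs0 htT hP)

end Omega

section Omega2

variable {E : Type*} [NormedAddCommGroup E] {X : ℝ → E} {p T M : ℝ}

lemma varSum_union {a c b : ℝ} {P Q : Finset ℝ} (hP : IsPartition a c P)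
    (hQ : IsPartition c b Q) (hac : a < c) (hcb : c < b) :
    varSum X p c P + varSum X p b Q = varSum X p b (P ∪ Q) := by
  obtain ⟨haP, hcP, hmemP⟩ := hP
  obtain ⟨hcQ, hbQ, hmemQ⟩ := hQ
  have hseteq : (P ∪ Q).erase b = (P.erase c) ∪ (Q.erase b) := by
    ext x
    simp only [Finset.mem_erase, Finset.mem_union]
    constructor
    · rintro ⟨hxb, hx | hx⟩
      · by_cases hxc : x = c
        · exact Or.inr ⟨hxb, hxc ▸ hcQ⟩
        · exact Or.inl ⟨hxc, hx⟩
      · exact Or.inr ⟨hxb, hx⟩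
    · rintro (⟨hxc, hx⟩ | ⟨hxb, hx⟩)
      · exact ⟨ne_of_lt (lt_of_le_of_lt (hmemP x hx).2 hcb), Or.inl hx⟩
      · exact ⟨hxb, Or.inr hx⟩
  have hdisj : Disjoint (P.erase c) (Q.erase b) := by
    rw [Finset.disjoint_left]
    intro x hx hx'
    rw [Finset.mem_erase] at hx hx'
    exact absurd (hmemQ x hx'.2).1 (not_le.2 (lt_of_le_of_ne (hmemP x hx.2).2 hx.1))
  conv_rhs => rw [varSum, hseteq, Finset.sum_union hdisj]
  congr 1
  · refine Finset.sum_congr rfl (fun x hx => ?_)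
    rw [Finset.mem_erase] at hx
    have hxc : x < c := lt_of_le_of_ne (hmemP x hx.2).2 hx.1
    obtain ⟨hyP, hxy, hymin⟩ := nextPt_spec hcP hxc
    have hyc : nextPt P c x ≤ c := hymin c hcP hxc
    have : nextPt (P ∪ Q) b x = nextPt P c x := by
      refine nextPt_eq_of (Finset.mem_union_left _ hyP) hxy (fun z hz hxz => ?_)
      rcases Finset.mem_union.1 hz with h | h
      · exact hymin z h hxz
      · exact le_trans hyc (hmemQ z h).1
    rw [this]
  · refine Finset.sum_congr rfl (fun x hx => ?_)
    rw [Finset.mem_erase] at hx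
    have hxb : x < b := lt_of_le_of_ne (hmemQ x hx.2).2 hx.1
    obtain ⟨hyQ, hxy, hymin⟩ := nextPt_spec hbQ hxb
    have : nextPt (P ∪ Q) b x = nextPt Q b x := by
      refine nextPt_eq_of (Finset.mem_union_right _ hyQ) hxy (fun z hz hxz => ?_)
      rcases Finset.mem_union.1 hz with h | h
      · exact absurd hxz (not_lt.2 (le_trans (hmemP z h).2 (hmemQ x hx.2).1))
      · exact hymin z h hxz
    rw [this]

lemma omg_superadd (hM : ∀ Q : Finset ℝ, IsPartition 0 T Q → varSum X p T Q ≤ M)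
    {a c b : ℝ} (ha0 : 0 ≤ a) (hbT : b ≤ T) (hac : a ≤ c) (hcb : c ≤ b) :
    omg X p a c + omg X p c b ≤ omg X p a b := by
  rcases eq_or_lt_of_le hac with rfl | hac'
  · rw [omg_self, zero_add]
  rcases eq_or_lt_of_le hcb with rfl | hcb'
  · rw [omg_self, add_zero]
  have hc0 : 0 ≤ c := le_trans ha0 hac
  have hcT : c ≤ T := le_trans hcb hbT
  have key : ∀ v ∈ {v | ∃ P : Finset ℝ, IsPartition a c P ∧ v = varSum X p c P},
      ∀ w ∈ {v | ∃ P : Finset ℝ, IsPartition c b P ∧ v = varSum X p b P},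
      v + w ≤ omg X p a b := by
    rintro v ⟨P, hP, rfl⟩ w ⟨Q, hQ, rfl⟩
    rw [varSum_union hP hQ hac' hcb']
    refine varSum_le_omg hM ha0 hbT ?_
    exact ⟨Finset.mem_union_left _ hP.1, Finset.mem_union_right _ hQ.2.1,
      fun x hx => by
        rcases Finset.mem_union.1 hx with h | h
        · exact ⟨(hP.2.2 x h).1, le_trans (hP.2.2 x h).2 hcb⟩
        · exact ⟨le_trans hac (hQ.2.2 x h).1, (hQ.2.2 x h).2⟩⟩
  have h1 : omg X p a c ≤ omg X p a b - omg X p c b := by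
    refine csSup_le (omg_set_nonempty hac) (fun v hv => ?_)
    rw [le_sub_iff_add_le]
    have h2 : omg X p c b ≤ omg X p a b - v := by
      refine csSup_le (omg_set_nonempty hcb) (fun w hw => ?_)
      rw [le_sub_iff_add_le, add_comm]
      exact key v hv w hw
    linarith
  linarith

lemma omg_partition_sum (hM : ∀ Q : Finset ℝ, IsPartition 0 T Q → varSum X p T Q ≤ M) :
    ∀ n : ℕ, ∀ s t : ℝ, ∀ P : Finset ℝ, 0 ≤ s → t ≤ T → IsPartition s t P → P.card = n →
    ∑ x ∈ P.erase t, omg X p x (nextPt P t x) ≤ omg X p s t := by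
  intro n
  induction n using Nat.strong_induction_on with
  | _ n ih =>
    intro s t P hs0 htT hP hcard
    obtain ⟨hsP, htP, hmem⟩ := hP
    have hst : s ≤ t := (hmem s hsP).2
    rcases eq_or_lt_of_le hst with rfl | hst'
    · rw [partition_self ⟨hsP, htP, hmem⟩]
      simp [omg_self]
    · obtain ⟨huP, hsu, humin⟩ := nextPt_spec htP hst'
      set u := nextPt P t s with hudef
      set P' := P.erase s with hP'def
      have hut : u ≤ t := (hmem u huP).2
      have huP' : u ∈ P' := Finset.mem_erase.2 ⟨ne_of_gt hsu, huP⟩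
      have htP' : t ∈ P' := Finset.mem_erase.2 ⟨ne_of_gt hst', htP⟩
      have hmem' : ∀ x ∈ P', x ∈ Set.Icc u t := by
        intro x hx
        rw [Finset.mem_erase] at hx
        exact ⟨humin x hx.2 (lt_of_le_of_ne (hmem x hx.2).1 (Ne.symm hx.1)),
          (hmem x hx.2).2⟩
      have hpart' : IsPartition u t P' := ⟨huP', htP', hmem'⟩
      have hsPt : s ∈ P.erase t := Finset.mem_erase.2 ⟨ne_of_lt hst', hsP⟩
      rw [← Finset.add_sum_erase _ _ hsPt, Finset.erase_right_comm, ← hudef]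
      have hagree : ∀ x ∈ P'.erase t, nextPt P t x = nextPt P' t x := by
        intro x hx
        rw [Finset.mem_erase] at hx
        have hxt : x < t := lt_of_le_of_ne (hmem' x hx.2).2 hx.1
        obtain ⟨hyP, hxy, hymin⟩ := nextPt_spec htP hxt
        have hys : nextPt P t x ≠ s :=
          ne_of_gt (lt_of_le_of_lt (le_trans (le_of_lt hsu) (hmem' x hx.2).1) hxy)
        exact (nextPt_eq_of (b := t) (Finset.mem_erase.2 ⟨hys, hyP⟩) hxy
          (fun z hz hxz => hymin z (Finset.mem_erase.1 hz).2 hxz)).symm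
      have hsum : ∑ x ∈ P'.erase t, omg X p x (nextPt P t x)
          = ∑ x ∈ P'.erase t, omg X p x (nextPt P' t x) :=
        Finset.sum_congr rfl (fun x hx => by rw [hagree x hx])
      have hcard' : P'.card < n := by
        rw [hP'def, ← hcard]
        exact Finset.card_erase_lt_of_mem hsP
      have hIH := ih P'.card hcard' u t P' (le_trans hs0 (le_of_lt hsu)) htT hpart' rfl
      rw [hsum]
      calc omg X p s u + ∑ x ∈ P'.erase t, omg X p x (nextPt P' t x)
          ≤ omg X p s u + omg X p u t := by linarith
        _ ≤ omg X p s t := omg_superadd hM hs0 htT (le_of_lt hsu) hut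

end Omega2

section Path

variable {d : ℕ} {X : ℝ → EuclideanSpace ℝ (Fin d)} {p T M : ℝ}

lemma rpow_root_le {A B q : ℝ} (hq : 0 < q) (hA : 0 ≤ A) (h : A ^ q ≤ B) :
    A ≤ B ^ (1 / q) := by
  have : A = (A ^ q) ^ (1 / q) := by
    rw [one_div, Real.rpow_rpow_inv hA (ne_of_gt hq)]
  rw [this]
  exact Real.rpow_le_rpow (Real.rpow_nonneg hA q) h (by positivity)

lemma rpow_root_mul {B q : ℝ} (hq : 0 < q) (hB : 0 ≤ B) :
    B ^ (1 / q) * B ^ (1 / q) = B ^ (2 / q) := by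
  rw [← Real.rpow_add' hB (by rw [← add_div]; positivity)]
  norm_num
  ring_nf

lemma coord_le_norm (u : EuclideanSpace ℝ (Fin d)) (i : Fin d) : |u i| ≤ ‖u‖ := by
  rw [EuclideanSpace.norm_eq]
  have h1 : |u i| = Real.sqrt (‖u i‖ ^ 2) := by
    rw [Real.sqrt_sq_eq_abs]; simp [abs_abs]
  rw [h1]
  apply Real.sqrt_le_sqrt
  exact Finset.single_le_sum (f := fun j => ‖u j‖ ^ 2) (fun j _ => sq_nonneg _)
    (Finset.mem_univ i)

lemma tensor_norm_le (u v : EuclideanSpace ℝ (Fin d)) :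
    ‖(fun i j => u i * v j : Fin d → Fin d → ℝ)‖ ≤ ‖u‖ * ‖v‖ := by
  rw [pi_norm_le_iff_of_nonneg (by positivity)]
  intro i
  rw [pi_norm_le_iff_of_nonneg (by positivity)]
  intro j
  rw [Real.norm_eq_abs, abs_mul]
  exact mul_le_mul (coord_le_norm u i) (coord_le_norm v j) (abs_nonneg _) (norm_nonneg _)

/-- ‖X_{y-} - X v‖ controlled by omg over an interval containing (v, y]. -/
lemma leftLim_sub_le (hXc : Cadlag X 0 T)
    (hM : ∀ Q : Finset ℝ, IsPartition 0 T Q → varSum X p T Q ≤ M) (hp : 0 < p)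
    {s t v y : ℝ} (hs0 : 0 ≤ s) (htT : t ≤ T) (hsv : s ≤ v) (hvy : v < y) (hyt : y ≤ t) :
    ‖minus X 0 y - X v‖ ≤ (omg X p s t) ^ (1 / p) := by
  have hy0 : 0 < y := lt_of_le_of_lt (le_trans hs0 hsv) hvy
  obtain ⟨L, hL⟩ := hXc.2 y ⟨hy0, le_trans hyt htT⟩
  have hminus : minus X 0 y = L := by
    rw [minus, if_neg (not_le.2 hy0)]
    exact leftLim_eq_of_tendsto hL
  rw [hminus]
  have htends : Filter.Tendsto (fun u' => ‖X u' - X v‖) (nhdsWithin y (Set.Iio y))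
      (nhds ‖L - X v‖) := (hL.sub_const (X v)).norm
  refine le_of_tendsto htends ?_
  filter_upwards [Ioo_mem_nhdsLT_of_mem (Set.mem_Ioc.2 ⟨hvy, le_refl y⟩)] with u' hu'
  exact rpow_root_le hp (norm_nonneg _)
    (increment_le_omg hM hp hs0 htT hsv hu'.1 (le_trans (le_of_lt hu'.2) hyt))

/-- ‖X_{y-} - X_{x-}‖ controlled by omg over an interval with room to the left of x. -/
lemma leftLim_sub_leftLim_le (hXc : Cadlag X 0 T)
    (hM : ∀ Q : Finset ℝ, IsPartition 0 T Q → varSum X p T Q ≤ M) (hp : 0 < p)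
    {s t x y : ℝ} (hs0 : 0 ≤ s) (htT : t ≤ T) (hsx : s < x) (hxy : x < y) (hyt : y ≤ t) :
    ‖minus X 0 y - minus X 0 x‖ ≤ (omg X p s t) ^ (1 / p) := by
  have hx0 : 0 < x := lt_of_le_of_lt hs0 hsx
  obtain ⟨L, hL⟩ := hXc.2 x ⟨hx0, le_trans (le_of_lt hxy) (le_trans hyt htT)⟩
  have hminus : minus X 0 x = L := by
    rw [minus, if_neg (not_le.2 hx0)]
    exact leftLim_eq_of_tendsto hL
  rw [hminus]
  have htends : Filter.Tendsto (fun v' => ‖minus X 0 y - X v'‖) (nhdsWithin x (Set.Iio x))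
      (nhds ‖minus X 0 y - L‖) := (Filter.Tendsto.const_sub _ hL).norm
  refine le_of_tendsto htends ?_
  filter_upwards [Ioo_mem_nhdsLT_of_mem (Set.mem_Ioc.2 ⟨hsx, le_refl x⟩)] with v' hv'
  exact leftLim_sub_le hXc hM hp hs0 htT (le_of_lt hv'.1) (lt_trans hv'.2 hxy) hyt

lemma increment_root_le (hM : ∀ Q : Finset ℝ, IsPartition 0 T Q → varSum X p T Q ≤ M)
    (hp : 0 < p) {s t x y : ℝ} (hs0 : 0 ≤ s) (htT : t ≤ T) (hsx : s ≤ x) (hxy : x < y)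
    (hyt : y ≤ t) : ‖X y - X x‖ ≤ (omg X p s t) ^ (1 / p) :=
  rpow_root_le hp (norm_nonneg _) (increment_le_omg hM hp hs0 htT hsx hxy hyt)

end Path

section Diff

variable {d : ℕ} {X : ℝ → EuclideanSpace ℝ (Fin d)} {p T M : ℝ}

noncomputable def ff (X : ℝ → EuclideanSpace ℝ (Fin d)) (s x y : ℝ) : Fin d → Fin d → ℝ :=
  fun i j => (minus X 0 x i - X s i) * (X y j - X x j)

lemma ff_identity (X : ℝ → EuclideanSpace ℝ (Fin d)) (s x₀ c sc : ℝ) :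
    ff X s x₀ c + ff X s c sc - ff X s x₀ sc =
      fun i j => (minus X 0 c - minus X 0 x₀) i * (X sc - X c) j := by
  funext i j
  simp only [ff, Pi.add_apply, Pi.sub_apply, PiLp.sub_apply]
  ring

lemma diff_bound (hXc : Cadlag X 0 T)
    (hM : ∀ Q : Finset ℝ, IsPartition 0 T Q → varSum X p T Q ≤ M) (hp : 0 < p)
    {s t c : ℝ} {P : Finset ℝ} (hP : IsPartition s t P) (hs0 : 0 ≤ s) (htT : t ≤ T)
    (hc : c ∈ P) (hcs : c ≠ s) (hct : c ≠ t) (hx₀ : s < prevPt P s c) :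
    ‖RS (ff X s) t P - RS (ff X s) t (P.erase c)‖ ≤
      omg X p (prevPt P s (prevPt P s c)) (nextPt P t c) ^ (2 / p) := by
  obtain ⟨hsP, htP, hmem⟩ := hP
  have hsc' : s < c := lt_of_le_of_ne (hmem c hc).1 (Ne.symm hcs)
  have hct' : c < t := lt_of_le_of_ne (hmem c hc).2 hct
  set x₀ := prevPt P s c with hx₀def
  set w := prevPt P s x₀ with hwdef
  set sc := nextPt P t c with hscdef
  obtain ⟨hx₀P, hx₀c, _⟩ := prevPt_spec hsP hsc'
  obtain ⟨hwP, hwx₀, _⟩ := prevPt_spec hsP hx₀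
  obtain ⟨hscP, hcsc, _⟩ := nextPt_spec htP hct'
  have hw0 : 0 ≤ w := le_trans hs0 (hmem w hwP).1
  have hscT : sc ≤ T := le_trans (hmem sc hscP).2 htT
  have hrem := RS_removal (ff X s) ⟨hsP, htP, hmem⟩ hc (by exact hcs) hct
  rw [hrem, ff_identity]
  have htensor := tensor_norm_le (minus X 0 c - minus X 0 x₀) (X sc - X c)
  refine le_trans htensor ?_
  have h1 : ‖minus X 0 c - minus X 0 x₀‖ ≤ omg X p w sc ^ (1 / p) :=
    leftLim_sub_leftLim_le hXc hM hp hw0 hscT hwx₀ hx₀c (le_of_lt hcsc)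
  have h2 : ‖X sc - X c‖ ≤ omg X p w sc ^ (1 / p) :=
    increment_root_le hM hp hw0 hscT
      (le_trans (le_of_lt hwx₀) (le_of_lt hx₀c)) hcsc (le_refl _)
  calc ‖minus X 0 c - minus X 0 x₀‖ * ‖X sc - X c‖
      ≤ omg X p w sc ^ (1 / p) * omg X p w sc ^ (1 / p) :=
        mul_le_mul h1 h2 (norm_nonneg _) (Real.rpow_nonneg
          (omg_nonneg hM hw0 hscT (le_trans (le_of_lt hwx₀)
            (le_trans (le_of_lt hx₀c) (le_of_lt hcsc)))) _)
    _ = omg X p w sc ^ (2 / p) := rpow_root_mul hp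
        (omg_nonneg hM hw0 hscT (le_trans (le_of_lt hwx₀)
          (le_trans (le_of_lt hx₀c) (le_of_lt hcsc))))

end Diff

section Rank

noncomputable def rank (P : Finset ℝ) (x : ℝ) : ℕ := (P.filter (fun y => y < x)).card

lemma rank_mono (P : Finset ℝ) {x y : ℝ} (hxy : x ≤ y) : rank P x ≤ rank P y :=
  Finset.card_le_card (Finset.monotone_filter_right P (fun z _ hz => lt_of_lt_of_le hz hxy))

lemma rank_strict_mono {P : Finset ℝ} {x y : ℝ} (hx : x ∈ P) (hxy : x < y) :
    rank P x < rank P y := by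
  apply Finset.card_lt_card
  rw [Finset.ssubset_iff_of_subset
    (Finset.monotone_filter_right P (fun z _ hz => lt_trans hz hxy))]
  exact ⟨x, Finset.mem_filter.2 ⟨hx, hxy⟩, fun h => absurd (Finset.mem_filter.1 h).2 (lt_irrefl x)⟩

lemma le_of_rank_le {P : Finset ℝ} {x y : ℝ} (hy : y ∈ P) (h : rank P x ≤ rank P y) : x ≤ y := by
  by_contra hc
  push_neg at hc
  exact absurd h (not_le.2 (rank_strict_mono hy hc))

lemma rank_nextPt {P : Finset ℝ} {t c : ℝ} (ht : t ∈ P) (hc : c ∈ P) (hct : c < t) :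
    rank P (nextPt P t c) = rank P c + 1 := by
  obtain ⟨hscP, hcsc, hscmin⟩ := nextPt_spec ht hct
  have : P.filter (fun y => y < nextPt P t c) = insert c (P.filter (fun y => y < c)) := by
    ext z
    simp only [Finset.mem_filter, Finset.mem_insert]
    constructor
    · rintro ⟨hzP, hz⟩
      rcases eq_or_ne z c with rfl | hzc
      · exact Or.inl rfl
      · rcases lt_or_gt_of_ne hzc with h | h
        · exact Or.inr ⟨hzP, h⟩
        · exact absurd (hscmin z hzP h) (not_le.2 hz)
    · rintro (rfl | ⟨hzP, hz⟩)
      · exact ⟨hc, hcsc⟩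
      · exact ⟨hzP, lt_trans hz hcsc⟩
  have hnm : c ∉ P.filter (fun y => y < c) := by simp
  rw [rank, this, Finset.card_insert_of_notMem hnm]
  rfl

lemma rank_prevPt {P : Finset ℝ} {s c : ℝ} (hs : s ∈ P) (hc : c ∈ P) (hsc : s < c) :
    rank P c = rank P (prevPt P s c) + 1 := by
  obtain ⟨hx₀P, hx₀c, hx₀max⟩ := prevPt_spec hs hsc
  have : P.filter (fun y => y < c) = insert (prevPt P s c) (P.filter (fun y => y < prevPt P s c)) := by
    ext z
    simp only [Finset.mem_filter, Finset.mem_insert]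
    constructor
    · rintro ⟨hzP, hz⟩
      rcases eq_or_lt_of_le (hx₀max z hzP hz) with h | h
      · exact Or.inl h
      · exact Or.inr ⟨hzP, h⟩
    · rintro (rfl | ⟨hzP, hz⟩)
      · exact ⟨hx₀P, hx₀c⟩
      · exact ⟨hzP, lt_trans hz hx₀c⟩
  have hnm : prevPt P s c ∉ P.filter (fun y => y < prevPt P s c) := by simp
  rw [rank, this, Finset.card_insert_of_notMem hnm]
  rfl

end Rank

section DisjointSum

variable {E : Type*} [NormedAddCommGroup E] {X : ℝ → E} {p T M : ℝ}

lemma omg_disjoint_sum (hM : ∀ Q : Finset ℝ, IsPartition 0 T Q → varSum X p T Q ≤ M) :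
    ∀ n : ℕ, ∀ (S : Finset ℝ) (lo hi : ℝ → ℝ) (s t : ℝ), 0 ≤ s → t ≤ T → s ≤ t →
    S.card = n →
    (∀ c ∈ S, s ≤ lo c ∧ lo c < hi c ∧ hi c ≤ t) →
    (∀ c ∈ S, ∀ c' ∈ S, c ≠ c' → hi c ≤ lo c' ∨ hi c' ≤ lo c) →
    ∑ c ∈ S, omg X p (lo c) (hi c) ≤ omg X p s t := by
  intro n
  induction n using Nat.strong_induction_on with
  | _ n ih =>
    intro S lo hi s t hs0 htT hst hcard hbd hdisj
    rcases Finset.eq_empty_or_nonempty S with rfl | hne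
    · simpa using omg_nonneg hM hs0 htT hst
    obtain ⟨c₀, hc₀S, hc₀max⟩ := Finset.exists_max_image S lo hne
    obtain ⟨hlo₀, hlh₀, hhi₀⟩ := hbd c₀ hc₀S
    have hkey : ∀ c ∈ S.erase c₀, hi c ≤ lo c₀ := by
      intro c hc
      rw [Finset.mem_erase] at hc
      rcases hdisj c hc.2 c₀ hc₀S hc.1 with h | h
      · exact h
      · exfalso
        have h1 := hc₀max c hc.2
        have h2 := (hbd c hc.2).2.1
        linarith
    rw [← Finset.add_sum_erase _ _ hc₀S]
    have hIH := ih (S.erase c₀).card (by rw [← hcard]; exact Finset.card_erase_lt_of_mem hc₀S)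
      (S.erase c₀) lo hi s (lo c₀) hs0 (le_trans (le_trans (le_of_lt hlh₀) hhi₀) htT)
      (le_trans hlo₀ (le_refl _)) rfl
      (fun c hc => ⟨(hbd c (Finset.mem_erase.1 hc).2).1, (hbd c (Finset.mem_erase.1 hc).2).2.1,
        hkey c hc⟩)
      (fun c hc c' hc' hne' => hdisj c (Finset.mem_erase.1 hc).2 c' (Finset.mem_erase.1 hc').2 hne')
    have h1 : omg X p s (lo c₀) + omg X p (lo c₀) (hi c₀) ≤ omg X p s (hi c₀) :=
      omg_superadd hM hs0 (le_trans hhi₀ htT) hlo₀ (le_of_lt hlh₀)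
    have h2 : omg X p s (hi c₀) + omg X p (hi c₀) t ≤ omg X p s t :=
      omg_superadd hM hs0 htT (le_trans hlo₀ (le_of_lt hlh₀)) hhi₀
    have h3 : 0 ≤ omg X p (hi c₀) t := omg_nonneg hM
      (le_trans hs0 (le_trans hlo₀ (le_of_lt hlh₀))) htT hhi₀
    linarith
end DisjointSum

section Pigeonhole

variable {E : Type*} [NormedAddCommGroup E] {X : ℝ → E} {p T M : ℝ}

lemma exists_small_window (hM : ∀ Q : Finset ℝ, IsPartition 0 T Q → varSum X p T Q ≤ M)
    {s t u : ℝ} {P : Finset ℝ} (hs0 : 0 ≤ s) (htT : t ≤ T)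
    (hP : IsPartition s t P) (hu : u ∈ P) (hsu : s < u)
    (humin : ∀ x ∈ P, x ≠ s → u ≤ x) {n : ℕ}
    (hcard : (((P.erase s).erase u).erase t).card = n + 1) :
    ∃ c ∈ ((P.erase s).erase u).erase t, s < prevPt P s c ∧
      omg X p (prevPt P s (prevPt P s c)) (nextPt P t c) ≤ 3 * omg X p s t / (n + 1) := by
  obtain ⟨hsP, htP, hmem⟩ := hP
  set R := ((P.erase s).erase u).erase t with hRdef
  have hst : s ≤ t := (hmem t htP).1
  have hfacts : ∀ c ∈ R, c ∈ P ∧ u < c ∧ c < t := by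
    intro c hc
    simp only [hRdef, Finset.mem_erase] at hc
    obtain ⟨hct, hcu, hcs, hcP⟩ := hc
    exact ⟨hcP, lt_of_le_of_ne (humin c hcP hcs) (Ne.symm hcu),
      lt_of_le_of_ne (hmem c hcP).2 hct⟩
  have hx₀f : ∀ c ∈ R, prevPt P s c ∈ P ∧ u ≤ prevPt P s c ∧ prevPt P s c < c := by
    intro c hc
    obtain ⟨hcP, huc, hct⟩ := hfacts c hc
    obtain ⟨h1, h2, h3⟩ := prevPt_spec hsP (lt_trans hsu huc)
    exact ⟨h1, h3 u hu huc, h2⟩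
  have hsx₀ : ∀ c ∈ R, s < prevPt P s c :=
    fun c hc => lt_of_lt_of_le hsu (hx₀f c hc).2.1
  have hwf : ∀ c ∈ R, prevPt P s (prevPt P s c) ∈ P ∧ s ≤ prevPt P s (prevPt P s c) ∧
      prevPt P s (prevPt P s c) < prevPt P s c := by
    intro c hc
    obtain ⟨h1, h2, h3⟩ := prevPt_spec hsP (hsx₀ c hc)
    exact ⟨h1, (hmem _ h1).1, h2⟩
  have hscf : ∀ c ∈ R, nextPt P t c ∈ P ∧ c < nextPt P t c ∧ nextPt P t c ≤ t := by
    intro c hc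
    obtain ⟨h1, h2, h3⟩ := nextPt_spec htP (hfacts c hc).2.2
    exact ⟨h1, h2, (hmem _ h1).2⟩
  -- window sum bound
  have hWS : ∑ c ∈ R, omg X p (prevPt P s (prevPt P s c)) (nextPt P t c)
      ≤ 3 * omg X p s t := by
    have hmaps : ∀ c ∈ R, rank P c % 3 ∈ Finset.range 3 :=
      fun c _ => Finset.mem_range.2 (Nat.mod_lt _ (by norm_num))
    rw [← Finset.sum_fiberwise_of_maps_to hmaps
      (fun c => omg X p (prevPt P s (prevPt P s c)) (nextPt P t c))]
    have hinner : ∀ r ∈ Finset.range 3,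
        ∑ c ∈ R.filter (fun c => rank P c % 3 = r),
          omg X p (prevPt P s (prevPt P s c)) (nextPt P t c) ≤ omg X p s t := by
      intro r _
      set S := R.filter (fun c => rank P c % 3 = r) with hSdef
      have hSsub : ∀ c ∈ S, c ∈ R := fun c hc => (Finset.mem_filter.1 hc).1
      refine omg_disjoint_sum hM S.card S (fun c => prevPt P s (prevPt P s c))
        (fun c => nextPt P t c) s t hs0 htT hst rfl ?_ ?_
      · intro c hc
        have hcR := hSsub c hc
        exact ⟨(hwf c hcR).2.1,
          lt_trans (hwf c hcR).2.2 (lt_trans (hx₀f c hcR).2.2 (hscf c hcR).2.1),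
          (hscf c hcR).2.2⟩
      · intro c hc c' hc' hne
        have hcR := hSsub c hc
        have hcR' := hSsub c' hc'
        have hrw : ∀ b ∈ R, rank P (nextPt P t b) = rank P b + 1 :=
          fun b hb => rank_nextPt htP (hfacts b hb).1 (hfacts b hb).2.2
        have hrx : ∀ b ∈ R, rank P b = rank P (prevPt P s b) + 1 :=
          fun b hb => rank_prevPt hsP (hfacts b hb).1 (lt_trans hsu (hfacts b hb).2.1)
        have hrx2 : ∀ b ∈ R, rank P (prevPt P s b) = rank P (prevPt P s (prevPt P s b)) + 1 :=
          fun b hb => rank_prevPt hsP (hx₀f b hb).1 (hsx₀ b hb)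
        have hmod : rank P c % 3 = rank P c' % 3 := by
          rw [(Finset.mem_filter.1 hc).2, (Finset.mem_filter.1 hc').2]
        rcases lt_or_gt_of_ne hne with hlt | hgt
        · left
          have h1 : rank P c < rank P c' := rank_strict_mono (hfacts c hcR).1 hlt
          have h3 : rank P c + 3 ≤ rank P c' := by omega
          refine le_of_rank_le (hwf c' hcR').1 ?_
          show rank P (nextPt P t c) ≤ rank P (prevPt P s (prevPt P s c'))
          rw [hrw c hcR]
          have := hrx c' hcR'
          have := hrx2 c' hcR'
          omega
        · right
          have h1 : rank P c' < rank P c := rank_strict_mono (hfacts c' hcR').1 hgt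
          have h3 : rank P c' + 3 ≤ rank P c := by omega
          refine le_of_rank_le (hwf c hcR).1 ?_
          show rank P (nextPt P t c') ≤ rank P (prevPt P s (prevPt P s c))
          rw [hrw c' hcR']
          have := hrx c hcR
          have := hrx2 c hcR
          omega
    calc ∑ r ∈ Finset.range 3, ∑ c ∈ R.filter (fun c => rank P c % 3 = r),
          omg X p (prevPt P s (prevPt P s c)) (nextPt P t c)
        ≤ ∑ r ∈ Finset.range 3, omg X p s t := Finset.sum_le_sum hinner
      _ = 3 * omg X p s t := by simp [Finset.sum_const]
  -- pigeonhole
  by_contra hcon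
  push_neg at hcon
  have hRne : R.Nonempty := Finset.card_pos.1 (by rw [hcard]; exact Nat.succ_pos n)
  have hlt : ∑ c ∈ R, (3 * omg X p s t / (n + 1)) <
      ∑ c ∈ R, omg X p (prevPt P s (prevPt P s c)) (nextPt P t c) :=
    Finset.sum_lt_sum_of_nonempty hRne (fun c hc => hcon c hc (hsx₀ c hc))
  rw [Finset.sum_const, hcard] at hlt
  have : ((n:ℝ) + 1) ≠ 0 := by positivity
  have heq : (n + 1) • (3 * omg X p s t / (n + 1)) = 3 * omg X p s t := by
    rw [nsmul_eq_mul]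
    push_cast
    field_simp
  rw [heq] at hlt
  linarith

end Pigeonhole

section KeyEstimate

variable {d : ℕ} {X : ℝ → EuclideanSpace ℝ (Fin d)} {p T M : ℝ}

lemma key_estimate (hXc : Cadlag X 0 T)
    (hM : ∀ Q : Finset ℝ, IsPartition 0 T Q → varSum X p T Q ≤ M) (hp : 0 < p)
    {s t u : ℝ} (hs0 : 0 ≤ s) (htT : t ≤ T) (hsu : s < u) (hut : u < t) :
    ∀ n : ℕ, ∀ P : Finset ℝ, IsPartition s t P → u ∈ P →
      (∀ x ∈ P, x ≠ s → u ≤ x) → P.card = n + 3 →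
      ‖RS (ff X s) t P - RS (ff X s) t ({s, u, t} : Finset ℝ)‖ ≤
        3 ^ (2/p) * omg X p s t ^ (2/p) *
          ∑ k ∈ Finset.Icc 1 n, ((1:ℝ)/(k:ℝ)) ^ (2/p) := by
  have hsut : s < t := lt_trans hsu hut
  have hsune : s ≠ u := ne_of_lt hsu
  have hstne : s ≠ t := ne_of_lt hsut
  have hutne : u ≠ t := ne_of_lt hut
  have hcard3 : ({s, u, t} : Finset ℝ).card = 3 := by
    rw [Finset.card_insert_of_notMem (by simp [hsune, hstne]),
      Finset.card_insert_of_notMem (by simp [hutne]), Finset.card_singleton]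
  intro n
  induction n with
  | zero =>
    intro P hP hu humin hcard
    have hsub : ({s, u, t} : Finset ℝ) ⊆ P := by
      intro x hx
      simp only [Finset.mem_insert, Finset.mem_singleton] at hx
      rcases hx with rfl | rfl | rfl
      · exact hP.1
      · exact hu
      · exact hP.2.1
    have hPeq : ({s, u, t} : Finset ℝ) = P :=
      Finset.eq_of_subset_of_card_le hsub (by rw [hcard, hcard3])
    rw [← hPeq]
    simp
  | succ n ihn =>
    intro P hP hu humin hcard
    have hω : 0 ≤ omg X p s t := omg_nonneg hM hs0 htT (le_of_lt hsut)
    -- card of R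
    have hcR : (((P.erase s).erase u).erase t).card = n + 1 := by
      rw [Finset.card_erase_of_mem
          (Finset.mem_erase.2 ⟨Ne.symm hutne, Finset.mem_erase.2 ⟨Ne.symm hstne, hP.2.1⟩⟩),
        Finset.card_erase_of_mem (Finset.mem_erase.2 ⟨Ne.symm hsune, hu⟩),
        Finset.card_erase_of_mem hP.1, hcard]
      omega
    obtain ⟨c, hcR', hsx₀, hwin⟩ := exists_small_window hM hs0 htT hP hu hsu humin hcR
    simp only [Finset.mem_erase] at hcR'
    obtain ⟨hct, hcu, hcs, hcP⟩ := hcR'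
    -- removal bound
    have hdiff := diff_bound hXc hM hp hP hs0 htT hcP hcs hct hsx₀
    have hwin2 : omg X p (prevPt P s (prevPt P s c)) (nextPt P t c) ^ (2/p)
        ≤ (3 * omg X p s t / (n + 1 : ℕ)) ^ (2/p) := by
      refine Real.rpow_le_rpow ?_ ?_ (by positivity)
      · refine omg_nonneg hM ?_ ?_ ?_
        · obtain ⟨h1, h2, h3⟩ := prevPt_spec hP.1 hsx₀
          exact le_trans hs0 (hP.2.2 _ h1).1
        · obtain ⟨h1, h2, h3⟩ := nextPt_spec hP.2.1
            (lt_of_le_of_ne (hP.2.2 c hcP).2 hct)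
          exact le_trans (hP.2.2 _ h1).2 htT
        · obtain ⟨h1, h2, h3⟩ := prevPt_spec hP.1 hsx₀
          obtain ⟨h4, h5, h6⟩ := nextPt_spec hP.2.1 (lt_of_le_of_ne (hP.2.2 c hcP).2 hct)
          exact le_trans (le_of_lt h2) (le_trans (le_of_lt (prevPt_spec hP.1
            (lt_of_le_of_ne (hP.2.2 c hcP).1 (Ne.symm hcs))).2.1) (le_of_lt h5))
      · push_cast
        exact hwin
    have hsplit : ((3 : ℝ) * omg X p s t / (n + 1 : ℕ)) ^ (2/p) =
        3 ^ (2/p) * omg X p s t ^ (2/p) * ((1:ℝ)/((n+1 : ℕ):ℝ)) ^ (2/p) := by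
      have h1 : (3 : ℝ) * omg X p s t / ((n+1 : ℕ):ℝ) =
          3 * (omg X p s t * ((1:ℝ)/((n+1 : ℕ):ℝ))) := by ring
      rw [h1, Real.mul_rpow (by norm_num) (by positivity),
        Real.mul_rpow hω (by positivity), mul_assoc]
    -- the erased partition
    set P' := P.erase c with hP'def
    have hP' : IsPartition s t P' :=
      ⟨Finset.mem_erase.2 ⟨Ne.symm hcs, hP.1⟩, Finset.mem_erase.2 ⟨Ne.symm hct, hP.2.1⟩,
        fun x hx => hP.2.2 x (Finset.mem_erase.1 hx).2⟩
    have hu' : u ∈ P' := Finset.mem_erase.2 ⟨Ne.symm hcu, hu⟩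
    have humin' : ∀ x ∈ P', x ≠ s → u ≤ x :=
      fun x hx hxs => humin x (Finset.mem_erase.1 hx).2 hxs
    have hcard' : P'.card = n + 3 := by
      rw [hP'def, Finset.card_erase_of_mem hcP, hcard]
      omega
    have hIH := ihn P' hP' hu' humin' hcard'
    -- assemble
    have htri : ‖RS (ff X s) t P - RS (ff X s) t ({s, u, t} : Finset ℝ)‖ ≤
        ‖RS (ff X s) t P - RS (ff X s) t P'‖ +
        ‖RS (ff X s) t P' - RS (ff X s) t ({s, u, t} : Finset ℝ)‖ := by
      have := norm_sub_le_norm_sub_add_norm_sub (RS (ff X s) t P) (RS (ff X s) t P')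
        (RS (ff X s) t ({s, u, t} : Finset ℝ))
      exact this
    have hsum : ∑ k ∈ Finset.Icc 1 (n+1), ((1:ℝ)/(k:ℝ)) ^ (2/p) =
        (∑ k ∈ Finset.Icc 1 n, ((1:ℝ)/(k:ℝ)) ^ (2/p)) + ((1:ℝ)/((n+1:ℕ):ℝ)) ^ (2/p) := by
      rw [← Finset.sum_Icc_succ_top (Nat.one_le_iff_ne_zero.2 (Nat.succ_ne_zero n))]
    rw [hsum, mul_add]
    have hb1 : ‖RS (ff X s) t P - RS (ff X s) t P'‖ ≤
        3 ^ (2/p) * omg X p s t ^ (2/p) * ((1:ℝ)/((n+1 : ℕ):ℝ)) ^ (2/p) := by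
      rw [← hsplit]
      exact le_trans hdiff hwin2
    linarith
end KeyEstimate

section Final

variable {d : ℕ} {X : ℝ → EuclideanSpace ℝ (Fin d)} {p T M : ℝ}

noncomputable def Zconst (p : ℝ) : ℝ := ∑' k : ℕ, ((1:ℝ)/(k:ℝ)) ^ (2/p)

lemma Z_summable (hq : 1 < 2/p) : Summable (fun k : ℕ => ((1:ℝ)/(k:ℝ)) ^ (2/p)) := by
  refine Summable.congr (Real.summable_one_div_nat_rpow.2 hq) (fun k => ?_)
  rw [one_div, one_div, Real.inv_rpow (Nat.cast_nonneg k), inv_eq_one_div, one_div]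

lemma Z_nonneg (p : ℝ) : 0 ≤ Zconst p :=
  tsum_nonneg (fun k => Real.rpow_nonneg (by positivity) _)

lemma Z_partial (hq : 1 < 2/p) (n : ℕ) :
    ∑ k ∈ Finset.Icc 1 n, ((1:ℝ)/(k:ℝ)) ^ (2/p) ≤ Zconst p :=
  Summable.sum_le_tsum _ (fun k _ => Real.rpow_nonneg (by positivity) _) (Z_summable hq)

lemma norm_le_sub_add' {F : Type*} [NormedAddCommGroup F] (a b : F) :
    ‖a‖ ≤ ‖a - b‖ + ‖b‖ := by
  simpa using norm_add_le (a - b) b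

lemma X_bound (hXc : Cadlag X 0 T)
    (hM : ∀ Q : Finset ℝ, IsPartition 0 T Q → varSum X p T Q ≤ M) (hp : 0 < p)
    (hq : 1 < 2/p) {s t : ℝ} (hs0 : 0 ≤ s) (hst : s < t) (htT : t ≤ T)
    {L : Fin d → Fin d → ℝ}
    (hL : RRSTendsto s t (fun P => RS (ff X s) t P) L) :
    ‖L‖ ≤ (1 + 3 ^ (2/p) * Zconst p) * omg X p s t ^ (2/p) := by
  have hω : 0 ≤ omg X p s t := omg_nonneg hM hs0 htT (le_of_lt hst)
  refine le_of_forall_pos_le_add (fun ε hε => ?_)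
  set C : ℝ := ‖minus X 0 s - X s‖ with hC
  have hCpos : 0 < 1 + C := by positivity
  set δ : ℝ := ε / (1 + C) with hδdef
  have hδ : 0 < δ := div_pos hε hCpos
  obtain ⟨P₀, hP₀, hP₀prop⟩ := hL δ hδ
  obtain ⟨hq1, hsq, hqmin⟩ := nextPt_spec hP₀.2.1 hst
  set q0 := nextPt P₀ t s with hq0def
  have hq0t : q0 ≤ t := (hP₀.2.2 _ hq1).2
  -- choose u close to s
  have hrc : Filter.Tendsto X (nhdsWithin s (Set.Ioi s)) (nhds (X s)) :=
    (hXc.1 s ⟨hs0, lt_of_lt_of_le hst htT⟩).mono_left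
      (nhdsWithin_mono s Set.Ioi_subset_Ici_self)
  have hev1 : ∀ᶠ u in nhdsWithin s (Set.Ioi s), dist (X u) (X s) < δ :=
    Metric.tendsto_nhds.1 hrc δ hδ
  have hev2 : Set.Ioo s q0 ∈ nhdsWithin s (Set.Ioi s) :=
    Ioo_mem_nhdsGT_of_mem (Set.mem_Ico.2 ⟨le_refl s, hsq⟩)
  obtain ⟨u, hud, huo⟩ := (hev1.and (Filter.eventually_of_mem hev2 (fun x hx => hx))).exists
  have hsu : s < u := huo.1
  have huq : u < q0 := huo.2
  have hut : u < t := lt_of_lt_of_le huq hq0t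
  have huX : ‖X u - X s‖ < δ := by rwa [dist_eq_norm] at hud
  -- refined partition
  set P : Finset ℝ := insert u P₀ with hPdef
  have hP : IsPartition s t P := by
    refine ⟨Finset.mem_insert_of_mem hP₀.1, Finset.mem_insert_of_mem hP₀.2.1, fun x hx => ?_⟩
    rcases Finset.mem_insert.1 hx with rfl | hx'
    · exact ⟨le_of_lt hsu, le_of_lt hut⟩
    · exact hP₀.2.2 x hx'
  have hsub : P₀ ⊆ P := Finset.subset_insert _ _
  have huP : u ∈ P := Finset.mem_insert_self _ _
  have humin : ∀ x ∈ P, x ≠ s → u ≤ x := by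
    intro x hx hxs
    rcases Finset.mem_insert.1 hx with rfl | hx'
    · exact le_refl _
    · exact le_trans (le_of_lt huq)
        (hqmin x hx' (lt_of_le_of_ne (hP₀.2.2 x hx').1 (Ne.symm hxs)))
  -- card ≥ 3
  have hsut3 : ({s, u, t} : Finset ℝ) ⊆ P := by
    intro x hx
    simp only [Finset.mem_insert, Finset.mem_singleton] at hx
    rcases hx with rfl | rfl | rfl
    · exact hP.1
    · exact huP
    · exact hP.2.1
  have hcard3 : ({s, u, t} : Finset ℝ).card = 3 := by
    rw [Finset.card_insert_of_notMem
        (by simp [ne_of_lt hsu, ne_of_lt (lt_trans hsu hut)]),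
      Finset.card_insert_of_notMem (by simp [ne_of_lt hut]), Finset.card_singleton]
  have hcardP : 3 ≤ P.card := hcard3 ▸ Finset.card_le_card hsut3
  have hcard : P.card = (P.card - 3) + 3 := by omega
  -- key estimate
  have hkey := key_estimate hXc hM hp hs0 htT hsu hut (P.card - 3) P hP huP humin hcard
  have hkey2 : ‖RS (ff X s) t P - RS (ff X s) t ({s, u, t} : Finset ℝ)‖ ≤
      3 ^ (2/p) * omg X p s t ^ (2/p) * Zconst p := by
    refine le_trans hkey ?_
    refine mul_le_mul_of_nonneg_left (Z_partial hq _) ?_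
    positivity
  -- compute RS on {s,u,t}
  have herase : ({s, u, t} : Finset ℝ).erase t = {s, u} := by
    rw [Finset.erase_insert_of_ne (ne_of_lt (lt_trans hsu hut)),
      Finset.erase_insert_of_ne (ne_of_lt hut)]
    simp
  have hnext1 : nextPt ({s, u, t} : Finset ℝ) t s = u := by
    refine nextPt_eq_of (by simp) hsu (fun z hz hsz => ?_)
    simp only [Finset.mem_insert, Finset.mem_singleton] at hz
    rcases hz with rfl | rfl | rfl
    · exact absurd hsz (lt_irrefl _)
    · exact le_refl _
    · exact le_of_lt hut
  have hnext2 : nextPt ({s, u, t} : Finset ℝ) t u = t := by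
    refine nextPt_eq_of (by simp) hut (fun z hz huz => ?_)
    simp only [Finset.mem_insert, Finset.mem_singleton] at hz
    rcases hz with rfl | rfl | rfl
    · exact absurd huz (not_lt.2 (le_of_lt hsu))
    · exact absurd huz (lt_irrefl _)
    · exact le_refl _
  have hRS3 : RS (ff X s) t ({s, u, t} : Finset ℝ) = ff X s s u + ff X s u t := by
    rw [RS, herase, Finset.sum_insert (by simp [ne_of_lt hsu]), Finset.sum_singleton,
      hnext1, hnext2]
  -- bound the two base terms
  have hb1 : ‖ff X s s u‖ ≤ C * δ := by
    have hfe : ff X s s u = fun i j => (minus X 0 s - X s) i * (X u - X s) j := by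
      funext i j
      simp only [ff, PiLp.sub_apply]
    rw [hfe]
    refine le_trans (tensor_norm_le _ _) ?_
    exact mul_le_mul_of_nonneg_left (le_of_lt huX) (norm_nonneg _)
  have hb2 : ‖ff X s u t‖ ≤ omg X p s t ^ (2/p) := by
    have hfe : ff X s u t = fun i j => (minus X 0 u - X s) i * (X t - X u) j := by
      funext i j
      simp only [ff, PiLp.sub_apply]
    rw [hfe]
    refine le_trans (tensor_norm_le _ _) ?_
    calc ‖minus X 0 u - X s‖ * ‖X t - X u‖
        ≤ omg X p s t ^ (1/p) * omg X p s t ^ (1/p) :=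
          mul_le_mul (leftLim_sub_le hXc hM hp hs0 htT (le_refl s) hsu (le_of_lt hut))
            (increment_root_le hM hp hs0 htT (le_of_lt hsu) hut (le_refl t))
            (norm_nonneg _) (Real.rpow_nonneg hω _)
      _ = omg X p s t ^ (2/p) := rpow_root_mul hp hω
  have hnear : ‖RS (ff X s) t P - L‖ < δ := hP₀prop P hP hsub
  have htotal : ‖L‖ ≤ δ + (3 ^ (2/p) * omg X p s t ^ (2/p) * Zconst p) +
      (C * δ + omg X p s t ^ (2/p)) := by
    have t1 : ‖L‖ ≤ ‖L - RS (ff X s) t P‖ + ‖RS (ff X s) t P‖ := norm_le_sub_add' _ _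
    have t2 : ‖RS (ff X s) t P‖ ≤
        ‖RS (ff X s) t P - RS (ff X s) t ({s, u, t} : Finset ℝ)‖ +
        ‖RS (ff X s) t ({s, u, t} : Finset ℝ)‖ := norm_le_sub_add' _ _
    have t3 : ‖RS (ff X s) t ({s, u, t} : Finset ℝ)‖ ≤ C * δ + omg X p s t ^ (2/p) := by
      rw [hRS3]
      exact le_trans (norm_add_le _ _) (add_le_add hb1 hb2)
    have t4 : ‖L - RS (ff X s) t P‖ < δ := by rwa [norm_sub_rev]
    linarith
  have hδε : δ + C * δ = ε := by
    rw [hδdef]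
    field_simp
  have hfin : (1 + 3 ^ (2/p) * Zconst p) * omg X p s t ^ (2/p) =
      omg X p s t ^ (2/p) + 3 ^ (2/p) * omg X p s t ^ (2/p) * Zconst p := by ring
  linarith

end Final

/-- If `X` is a càdlàg path of finite `p`-variation, `p ∈ [1,2)`, and
`𝕏_{s,t} = ∫_{(s,t]} (X_{r-} − X_s) ⊗ dX_r` is the Young integral (the
refinement-Riemann–Stieltjes limit of left-point Riemann sums), then `𝕏` has finite
`p/2`-variation. -/
theorem young_lift_finite_half_p_variation
    {d : ℕ} (T p : ℝ) (hT : 0 < T) (hp1 : 1 ≤ p) (hp2 : p < 2)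
    (X : ℝ → EuclideanSpace ℝ (Fin d))
    (hXc : Cadlag X 0 T) (hXv : HasFiniteVar X p 0 T)
    (𝕏 : ℝ → ℝ → (Fin d → Fin d → ℝ))
    (h𝕏 : ∀ s t : ℝ, 0 ≤ s → s < t → t ≤ T →
      RRSTendsto s t
        (fun P => ∑ x ∈ P.erase t,
          (fun i j => (minus X 0 x i - X s i) * (X (nextPt P t x) j - X x j)
            : Fin d → Fin d → ℝ))
        (𝕏 s t)) :
    HasFiniteVar2 𝕏 (p / 2) 0 T := by
  obtain ⟨M, hM⟩ := hXv
  have hp0 : 0 < p := lt_of_lt_of_le one_pos hp1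
  have hq : 1 < 2 / p := (one_lt_div hp0).2 hp2
  have hZ := Z_nonneg p
  set K : ℝ := 1 + 3 ^ (2/p) * Zconst p with hKdef
  have hK : 0 ≤ K := by positivity
  refine ⟨K ^ (p/2) * omg X p 0 T, fun P hP => ?_⟩
  have hstep : ∀ x ∈ P.erase T, ‖𝕏 x (nextPt P T x)‖ ^ (p/2) ≤
      K ^ (p/2) * omg X p x (nextPt P T x) := by
    intro x hx
    rw [Finset.mem_erase] at hx
    have hx0 : 0 ≤ x := (hP.2.2 x hx.2).1
    have hxT : x < T := lt_of_le_of_ne (hP.2.2 x hx.2).2 hx.1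
    obtain ⟨hyP, hxy, hymin⟩ := nextPt_spec hP.2.1 hxT
    set y := nextPt P T x with hydef
    have hyT : y ≤ T := (hP.2.2 y hyP).2
    have hRRS : RRSTendsto x y (fun Q => RS (ff X x) y Q) (𝕏 x y) :=
      h𝕏 x y hx0 hxy hyT
    have hbd := X_bound hXc hM hp0 hq hx0 hxy hyT hRRS
    have hω : 0 ≤ omg X p x y := omg_nonneg hM hx0 hyT (le_of_lt hxy)
    calc ‖𝕏 x y‖ ^ (p/2)
        ≤ ((1 + 3 ^ (2/p) * Zconst p) * omg X p x y ^ (2/p)) ^ (p/2) :=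
          Real.rpow_le_rpow (norm_nonneg _) hbd (by positivity)
      _ = K ^ (p/2) * (omg X p x y ^ (2/p)) ^ (p/2) :=
          Real.mul_rpow hK (Real.rpow_nonneg hω _)
      _ = K ^ (p/2) * omg X p x y := by
          rw [← Real.rpow_mul hω]
          have hexp : 2 / p * (p / 2) = 1 := by
            field_simp
          rw [hexp, Real.rpow_one]
  calc varSum2 𝕏 (p/2) T P = ∑ x ∈ P.erase T, ‖𝕏 x (nextPt P T x)‖ ^ (p/2) := rfl
    _ ≤ ∑ x ∈ P.erase T, K ^ (p/2) * omg X p x (nextPt P T x) :=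
        Finset.sum_le_sum hstep
    _ = K ^ (p/2) * ∑ x ∈ P.erase T, omg X p x (nextPt P T x) := by
        rw [Finset.mul_sum]
    _ ≤ K ^ (p/2) * omg X p 0 T := by
        refine mul_le_mul_of_nonneg_left ?_ (Real.rpow_nonneg hK _)
        exact omg_partition_sum hM P.card 0 T P (le_refl 0) (le_refl T) hP rfl
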